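/- Let k and d be positive integers and let r > 0 satisfy 4r ≤ π and 3r ≤ |1 − e^{4ir}|. Let f_1,…,f_d ∈ M_k(ℂ) be mutually orthogonal projections with f_1 + ⋯ + f_d = I, let β_1,…,β_d ∈ [−π, π], and set h = i·Σ_{j=1}^d β_j f_j. For each j let γ_j = β_j if |β_j| ≤ 4r, γ_j = 4r if β_j > 4r, γ_j = −4r if β_j < −4r, and set z = i·Σ_{j=1}^d γ_j f_j. Then for every unitary u ∈ U_k with ‖u − I‖ < 2r: |u − exp(z)|₂ ≤ 7·|u − exp(h)|₂. -/

import Mathlib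

open Matrix

/-- The normalized trace `tr_k` on `M_k(ℂ)`. -/
noncomputable def trN {k : ℕ} (x : Matrix (Fin k) (Fin k) ℂ) : ℂ :=
  x.trace / (k : ℂ)

/-- The operator norm on `M_k(ℂ)` (acting on Euclidean space). -/
noncomputable def opN {k : ℕ} (x : Matrix (Fin k) (Fin k) ℂ) : ℝ :=
  ‖Matrix.toEuclideanCLM (𝕜 := ℂ) x‖

/-- The normalized Hilbert–Schmidt norm `|z|₂ = (tr_k(z*z))^{1/2}`. -/
noncomputable def hsN {k : ℕ} (x : Matrix (Fin k) (Fin k) ℂ) : ℝ :=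
  Real.sqrt (trN (star x * x)).re

namespace Stmt13Aux

variable {k d : ℕ}

noncomputable def Ssq {k : ℕ} (x : Matrix (Fin k) (Fin k) ℂ) : ℝ :=
  ∑ i, ∑ j, Complex.normSq (x i j)

lemma Ssq_nonneg (x : Matrix (Fin k) (Fin k) ℂ) : 0 ≤ Ssq x :=
  Finset.sum_nonneg fun _ _ => Finset.sum_nonneg fun _ _ => Complex.normSq_nonneg _

lemma trace_star_mul_self (x : Matrix (Fin k) (Fin k) ℂ) :
    (star x * x).trace = ((Ssq x : ℝ) : ℂ) := by
  have h1 : (star x * x).trace = ∑ i, ∑ j, ((Complex.normSq (x j i) : ℝ) : ℂ) := by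
    simp [Matrix.trace, Matrix.diag, Matrix.mul_apply, Matrix.star_apply,
      Complex.normSq_eq_conj_mul_self]
  rw [h1, Finset.sum_comm, Ssq]
  push_cast
  rfl

lemma hsN_eq_sqrt (x : Matrix (Fin k) (Fin k) ℂ) : hsN x = Real.sqrt (Ssq x / k) := by
  unfold hsN trN
  rw [trace_star_mul_self]
  congr 1
  rw [show ((k : ℕ) : ℂ) = ((k : ℝ) : ℂ) by push_cast; rfl, ← Complex.ofReal_div,
    Complex.ofReal_re]

lemma hsN_nonneg (x : Matrix (Fin k) (Fin k) ℂ) : 0 ≤ hsN x := Real.sqrt_nonneg _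

lemma hsN_sq (x : Matrix (Fin k) (Fin k) ℂ) : hsN x ^ 2 = Ssq x / k := by
  rw [hsN_eq_sqrt]
  exact Real.sq_sqrt (div_nonneg (Ssq_nonneg x) (Nat.cast_nonneg k))

lemma Ssq_eq_k_mul (x : Matrix (Fin k) (Fin k) ℂ) (hk : 0 < k) :
    Ssq x = k * hsN x ^ 2 := by
  rw [hsN_sq]
  field_simp

/-- matrix as a euclidean vector -/
noncomputable def toE {k : ℕ} (x : Matrix (Fin k) (Fin k) ℂ) :
    EuclideanSpace ℂ (Fin k × Fin k) :=
  (WithLp.equiv 2 _).symm fun p => x p.1 p.2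

lemma norm_toE (x : Matrix (Fin k) (Fin k) ℂ) : ‖toE x‖ = Real.sqrt (Ssq x) := by
  rw [EuclideanSpace.norm_eq]
  congr 1
  rw [Fintype.sum_prod_type, Ssq]
  refine Finset.sum_congr rfl fun i _ => Finset.sum_congr rfl fun j _ => ?_
  simp [toE, Complex.sq_norm]

lemma hsN_eq_norm (x : Matrix (Fin k) (Fin k) ℂ) : hsN x = ‖toE x‖ / Real.sqrt k := by
  rw [hsN_eq_sqrt, norm_toE, Real.sqrt_div (Ssq_nonneg x)]

lemma toE_add (a b : Matrix (Fin k) (Fin k) ℂ) : toE (a + b) = toE a + toE b := rfl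

lemma hsN_add_le (a b : Matrix (Fin k) (Fin k) ℂ) : hsN (a + b) ≤ hsN a + hsN b := by
  rw [hsN_eq_norm, hsN_eq_norm, hsN_eq_norm, ← add_div, toE_add]
  gcongr
  exact norm_add_le _ _

lemma hsN_smul (c : ℂ) (x : Matrix (Fin k) (Fin k) ℂ) :
    hsN (c • x) = ‖c‖ * hsN x := by
  have : toE (c • x) = c • toE x := rfl
  rw [hsN_eq_norm, hsN_eq_norm, this, norm_smul, mul_div_assoc]

lemma hsN_neg (x : Matrix (Fin k) (Fin k) ℂ) : hsN (-x) = hsN x := by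
  have : (-x : Matrix (Fin k) (Fin k) ℂ) = (-1 : ℂ) • x := by simp
  rw [this, hsN_smul]; simp

lemma hsN_sub_le (a b : Matrix (Fin k) (Fin k) ℂ) : hsN (a - b) ≤ hsN a + hsN b := by
  rw [sub_eq_add_neg]
  exact (hsN_add_le a (-b)).trans (by rw [hsN_neg])

lemma normE_sq (w : Fin k → ℂ) :
    ‖((WithLp.equiv 2 (Fin k → ℂ)).symm w : EuclideanSpace ℂ (Fin k))‖ ^ 2
      = ∑ i, Complex.normSq (w i) := by
  rw [EuclideanSpace.norm_eq, Real.sq_sqrt (Finset.sum_nonneg fun _ _ => sq_nonneg _)]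
  refine Finset.sum_congr rfl fun i _ => ?_
  simp [Complex.sq_norm]

lemma Ssq_mul_le (x y : Matrix (Fin k) (Fin k) ℂ) :
    Ssq (x * y) ≤ opN x ^ 2 * Ssq y := by
  have col : ∀ j, ∑ i, Complex.normSq ((x * y) i j)
      ≤ opN x ^ 2 * ∑ i, Complex.normSq (y i j) := by
    intro j
    set v : EuclideanSpace ℂ (Fin k) := (WithLp.equiv 2 _).symm (fun i => y i j) with hv
    have hcv : Matrix.toEuclideanCLM (𝕜 := ℂ) x v
        = (WithLp.equiv 2 _).symm (fun i => (x * y) i j) := by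
      rw [hv]
      rfl
    have h1 : ‖Matrix.toEuclideanCLM (𝕜 := ℂ) x v‖ ≤ opN x * ‖v‖ :=
      (Matrix.toEuclideanCLM (𝕜 := ℂ) x).le_opNorm v
    have h2 : ‖Matrix.toEuclideanCLM (𝕜 := ℂ) x v‖ ^ 2 ≤ (opN x * ‖v‖) ^ 2 :=
      pow_le_pow_left₀ (norm_nonneg _) h1 2
    rw [hcv, normE_sq] at h2
    rw [mul_pow] at h2
    have h3 : ‖v‖ ^ 2 = ∑ i, Complex.normSq (y i j) := by rw [hv, normE_sq]
    calc ∑ i, Complex.normSq ((x * y) i j) ≤ opN x ^ 2 * ‖v‖ ^ 2 := h2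
      _ = opN x ^ 2 * ∑ i, Complex.normSq (y i j) := by rw [h3]
  calc Ssq (x * y) = ∑ j, ∑ i, Complex.normSq ((x * y) i j) := Finset.sum_comm
    _ ≤ ∑ j, opN x ^ 2 * ∑ i, Complex.normSq (y i j) :=
        Finset.sum_le_sum fun j _ => col j
    _ = opN x ^ 2 * Ssq y := by rw [← Finset.mul_sum, Ssq, Finset.sum_comm]

lemma hsN_mul_le (x y : Matrix (Fin k) (Fin k) ℂ) : hsN (x * y) ≤ opN x * hsN y := by
  rw [hsN_eq_sqrt, hsN_eq_sqrt]
  have h1 : Ssq (x * y) / k ≤ opN x ^ 2 * (Ssq y / k) := by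
    rw [← mul_div_assoc]
    gcongr
    exact Ssq_mul_le x y
  have h2 := Real.sqrt_le_sqrt h1
  have hop : (0:ℝ) ≤ opN x := norm_nonneg _
  rwa [Real.sqrt_mul (sq_nonneg _), Real.sqrt_sq hop] at h2

lemma Ssq_eq_re (y : Matrix (Fin k) (Fin k) ℂ) :
    Ssq y = ((star y * y).trace).re := by
  rw [trace_star_mul_self, Complex.ofReal_re]

section proj
variable (f : Fin d → Matrix (Fin k) (Fin k) ℂ)
  (hfsa : ∀ j, star (f j) = f j) (hfidem : ∀ j, f j * f j = f j)
  (hforth : ∀ j j', j ≠ j' → f j * f j' = 0)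
  (hfsum : ∑ j, f j = 1)

include hfsa hfidem in
lemma pythagoras (a : Matrix (Fin k) (Fin k) ℂ) (hfsum : ∑ j, f j = 1) :
    ∑ j, Ssq (a * f j) = Ssq a := by
  have tr_eq : ∀ j, (star (a * f j) * (a * f j)).trace = (star a * a * f j).trace := by
    intro j
    have e1 : star (a * f j) * (a * f j) = f j * (star a * a * f j) := by
      rw [Matrix.star_mul, hfsa]
      noncomm_ring
    rw [e1, Matrix.trace_mul_comm, mul_assoc, hfidem]
  calc ∑ j, Ssq (a * f j) = ∑ j, ((star a * a * f j).trace).re := by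
        refine Finset.sum_congr rfl fun j _ => ?_
        rw [Ssq_eq_re, tr_eq]
    _ = ((∑ j, star a * a * f j).trace).re := by
        rw [Matrix.trace_sum, Complex.re_sum]
    _ = Ssq a := by
        rw [← Finset.mul_sum, hfsum, mul_one, ← Ssq_eq_re]

include hfsa hfidem hforth in
lemma Ssq_sum_smul (c : Fin d → ℂ) :
    Ssq (∑ j, c j • f j) = ∑ j, Complex.normSq (c j) * Ssq (f j) := by
  have e1 : star (∑ j, c j • f j) * (∑ j, c j • f j)
      = ∑ j, (Complex.normSq (c j) : ℂ) • f j := by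
    rw [star_sum]
    rw [Finset.sum_mul_sum]
    have : ∀ j j', star (c j • f j) * (c j' • f j')
        = ((starRingEnd ℂ) (c j) * c j') • (f j * f j') := by
      intro j j'
      rw [star_smul, hfsa]
      rw [smul_mul_smul_comm]
      rfl
    calc (∑ j, ∑ j', star (c j • f j) * (c j' • f j'))
        = ∑ j, ∑ j', ((starRingEnd ℂ) (c j) * c j') • (f j * f j') := by
          exact Finset.sum_congr rfl fun j _ => Finset.sum_congr rfl fun j' _ => this j j'
      _ = ∑ j, (Complex.normSq (c j) : ℂ) • f j := by
          refine Finset.sum_congr rfl fun j _ => ?_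
          rw [Finset.sum_eq_single j]
          · rw [hfidem, Complex.normSq_eq_conj_mul_self]
          · intro j' _ hne
            rw [hforth j j' (Ne.symm hne), smul_zero]
          · intro hj; exact absurd (Finset.mem_univ j) hj
  rw [Ssq_eq_re, e1, Matrix.trace_sum, Complex.re_sum]
  refine Finset.sum_congr rfl fun j _ => ?_
  rw [Matrix.trace_smul, smul_eq_mul, Complex.re_ofReal_mul, Ssq_eq_re, hfsa, hfidem]

include hfidem hforth in
lemma sum_smul_mul (g : Fin d → ℂ) (j : Fin d) :
    (∑ l, g l • f l) * f j = g j • f j := by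
  rw [Finset.sum_mul]
  rw [Finset.sum_eq_single j]
  · rw [smul_mul_assoc, hfidem]
  · intro l _ hne
    rw [smul_mul_assoc, hforth l j hne, smul_zero]
  · intro hj; exact absurd (Finset.mem_univ j) hj

include hfidem hforth in
lemma mul_sum_smul (g : Fin d → ℂ) (j : Fin d) :
    f j * (∑ l, g l • f l) = g j • f j := by
  rw [Finset.mul_sum]
  rw [Finset.sum_eq_single j]
  · rw [mul_smul_comm, hfidem]
  · intro l _ hne
    rw [mul_smul_comm, hforth j l (Ne.symm hne), smul_zero]
  · intro hj; exact absurd (Finset.mem_univ j) hj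

include hfidem hforth hfsum in
lemma pow_sum_smul (c : Fin d → ℂ) (n : ℕ) :
    (∑ j, c j • f j) ^ n = ∑ j, (c j ^ n) • f j := by
  induction n with
  | zero => simp [hfsum]
  | succ n ih =>
    rw [pow_succ, ih, Finset.sum_mul]
    refine Finset.sum_congr rfl fun j _ => ?_
    rw [smul_mul_assoc, mul_sum_smul f hfidem hforth c j, smul_smul, ← pow_succ]

include hfidem hforth hfsum in
lemma exp_sum_smul (c : Fin d → ℂ) :
    NormedSpace.exp (∑ j, c j • f j) = ∑ j, Complex.exp (c j) • f j := by
  have key : HasSum (fun n : ℕ => ((Nat.factorial n : ℂ)⁻¹) • (∑ j, c j • f j) ^ n)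
      (∑ j, Complex.exp (c j) • f j) := by
    have e1 : ∀ n : ℕ, ((Nat.factorial n : ℂ)⁻¹) • (∑ j, c j • f j) ^ n
        = ∑ j, (((Nat.factorial n : ℂ)⁻¹ • c j ^ n) • f j) := by
      intro n
      rw [pow_sum_smul f hfidem hforth hfsum, Finset.smul_sum]
      exact Finset.sum_congr rfl fun j _ => by rw [smul_smul, smul_eq_mul]
    simp only [e1]
    refine hasSum_sum fun j _ => ?_
    have hj : HasSum (fun n : ℕ => ((Nat.factorial n : ℂ)⁻¹) • c j ^ n) (NormedSpace.exp (c j)) :=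
      NormedSpace.exp_series_hasSum_exp' (𝕂 := ℂ) (c j)
    have := hj.smul_const (f j)
    rwa [← Complex.exp_eq_exp_ℂ] at this
  rw [NormedSpace.exp_eq_tsum ℂ]
  exact key.tsum_eq

end proj

lemma abs_exp_I_sub_one (θ : ℝ) :
    ‖Complex.exp (Complex.I * θ) - 1‖ = Real.sqrt (2 - 2 * Real.cos θ) := by
  rw [mul_comm, Complex.norm_def, Complex.normSq_apply]
  have hre : (Complex.exp ((θ:ℂ) * Complex.I) - 1).re = Real.cos θ - 1 := by
    simp [Complex.sub_re, Complex.exp_ofReal_mul_I_re]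
  have him : (Complex.exp ((θ:ℂ) * Complex.I) - 1).im = Real.sin θ := by
    simp [Complex.sub_im, Complex.exp_ofReal_mul_I_im]
  rw [hre, him]
  congr 1
  nlinarith [Real.sin_sq_add_cos_sq θ]

lemma tfun_mono {a b : ℝ} (ha : 0 ≤ a) (hab : a ≤ b) (hb : b ≤ Real.pi) :
    ‖Complex.exp (Complex.I * a) - 1‖
      ≤ ‖Complex.exp (Complex.I * b) - 1‖ := by
  rw [abs_exp_I_sub_one, abs_exp_I_sub_one]
  apply Real.sqrt_le_sqrt
  have := Real.cos_le_cos_of_nonneg_of_le_pi ha hb hab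
  linarith

lemma tfun_neg (θ : ℝ) :
    ‖Complex.exp (Complex.I * (-θ:ℝ)) - 1‖
      = ‖Complex.exp (Complex.I * θ) - 1‖ := by
  rw [abs_exp_I_sub_one, abs_exp_I_sub_one, Real.cos_neg]

end Stmt13Aux

/-- truncation estimate from the proof of Lemma 8.2:
replacing the skew-Hermitian logarithm `h = i Σ β_j f_j` by its spectral
truncation `z = i Σ γ_j f_j` at level `4r` worsens the `|·|₂`-distance to a
unitary `u` with `‖u − I‖ < 2r` by at most a factor `7`. -/
theorem stmt_13 (k d : ℕ) (hk : 0 < k) (hd : 0 < d)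
    (r : ℝ) (hr : 0 < r) (hrπ : 4 * r ≤ Real.pi)
    (hre : 3 * r ≤ ‖1 - Complex.exp (4 * r * Complex.I)‖)
    (f : Fin d → Matrix (Fin k) (Fin k) ℂ)
    (hfsa : ∀ j, star (f j) = f j) (hfidem : ∀ j, f j * f j = f j)
    (hforth : ∀ j j', j ≠ j' → f j * f j' = 0)
    (hfsum : ∑ j, f j = 1)
    (β : Fin d → ℝ) (hβ : ∀ j, β j ∈ Set.Icc (-Real.pi) Real.pi)
    (γ : Fin d → ℝ)
    (hγ1 : ∀ j, |β j| ≤ 4 * r → γ j = β j)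
    (hγ2 : ∀ j, 4 * r < β j → γ j = 4 * r)
    (hγ3 : ∀ j, β j < -(4 * r) → γ j = -(4 * r))
    (h z : Matrix (Fin k) (Fin k) ℂ)
    (hh : h = Complex.I • ∑ j, (β j : ℂ) • f j)
    (hz : z = Complex.I • ∑ j, (γ j : ℂ) • f j)
    (u : Matrix (Fin k) (Fin k) ℂ) (hu : u ∈ Matrix.unitaryGroup (Fin k) ℂ)
    (hunear : opN (u - 1) < 2 * r) :
    hsN (u - NormedSpace.exp z) ≤ 7 * hsN (u - NormedSpace.exp h) := by
  classical
  open Stmt13Aux in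
  have hkR : (0:ℝ) < k := by exact_mod_cast hk
  have hh' : h = ∑ j, (Complex.I * (β j : ℂ)) • f j := by
    rw [hh, Finset.smul_sum]
    exact Finset.sum_congr rfl fun j _ => smul_smul _ _ _
  have hz' : z = ∑ j, (Complex.I * (γ j : ℂ)) • f j := by
    rw [hz, Finset.smul_sum]
    exact Finset.sum_congr rfl fun j _ => smul_smul _ _ _
  have exph : NormedSpace.exp h = ∑ j, Complex.exp (Complex.I * (β j : ℂ)) • f j := by
    rw [hh']; exact Stmt13Aux.exp_sum_smul f hfidem hforth hfsum _
  have expz : NormedSpace.exp z = ∑ j, Complex.exp (Complex.I * (γ j : ℂ)) • f j := by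
    rw [hz']; exact Stmt13Aux.exp_sum_smul f hfidem hforth hfsum _
  set a := u - NormedSpace.exp h with ha
  set cj : Fin d → ℂ := fun j =>
    Complex.exp (Complex.I * (β j : ℂ)) - Complex.exp (Complex.I * (γ j : ℂ)) with hcj
  set w : Matrix (Fin k) (Fin k) ℂ := ∑ j, cj j • f j with hwdef
  have hw : NormedSpace.exp h - NormedSpace.exp z = w := by
    rw [exph, expz, hwdef, ← Finset.sum_sub_distrib]
    exact Finset.sum_congr rfl fun j _ => (sub_smul _ _ _).symm
  have hsplit : u - NormedSpace.exp z = a + w := by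
    rw [ha, ← hw]; abel
  -- rephrase the hypothesis on r
  have h3r : 3 * r ≤ ‖Complex.exp (Complex.I * ((4*r : ℝ) : ℂ)) - 1‖ := by
    have harg : (4 * (r:ℂ) * Complex.I) = Complex.I * ((4*r : ℝ) : ℂ) := by push_cast; ring
    calc 3 * r ≤ ‖1 - Complex.exp (4 * r * Complex.I)‖ := hre
      _ = ‖Complex.exp (Complex.I * ((4*r : ℝ) : ℂ)) - 1‖ := by
          rw [norm_sub_rev, harg]
  -- the per-index inequality
  have perj : ∀ j, Complex.normSq (cj j) * Stmt13Aux.Ssq (f j)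
      ≤ 36 * Stmt13Aux.Ssq (a * f j) := by
    intro j
    by_cases hcase : |β j| ≤ 4 * r
    · have hc0 : cj j = 0 := by simp [hcj, hγ1 j hcase]
      rw [hc0]
      simp only [map_zero, zero_mul]
      have := Stmt13Aux.Ssq_nonneg (a * f j)
      linarith
    · obtain ⟨hβl, hβu⟩ := hβ j
      have h4r0 : (0:ℝ) ≤ 4 * r := by linarith
      have hcases : 4 * r < β j ∨ β j < -(4 * r) := by
        by_contra hcon
        push_neg at hcon
        exact hcase (abs_le.mpr ⟨hcon.2, hcon.1⟩)
      set t := ‖Complex.exp (Complex.I * (β j : ℂ)) - 1‖ with ht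
      have key_scalar : ‖cj j‖ ≤ 6 * (t - 2*r) ∧ 3 * r ≤ t := by
        rcases hcases with hpos | hneg
        · have hγj : γ j = 4 * r := hγ2 j hpos
          have ht4 : ‖Complex.exp (Complex.I * ((4*r : ℝ) : ℂ)) - 1‖ ≤ t :=
            Stmt13Aux.tfun_mono h4r0 hpos.le hβu
          have h3t : 3 * r ≤ t := le_trans h3r ht4
          have habs1 : ‖cj j‖
              ≤ t + ‖Complex.exp (Complex.I * ((4*r : ℝ) : ℂ)) - 1‖ := by
            rw [hcj]
            simp only [hγj]
            calc ‖Complex.exp (Complex.I * (β j : ℂ))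
                    - Complex.exp (Complex.I * ((4*r : ℝ) : ℂ))‖
                ≤ ‖Complex.exp (Complex.I * (β j : ℂ)) - 1‖
                  + ‖1 - Complex.exp (Complex.I * ((4*r : ℝ) : ℂ))‖ :=
                  norm_sub_le_norm_sub_add_norm_sub _ 1 _
              _ = t + ‖Complex.exp (Complex.I * ((4*r : ℝ) : ℂ)) - 1‖ := by
                  rw [ht, norm_sub_rev 1]
          constructor
          · calc ‖cj j‖
                ≤ t + ‖Complex.exp (Complex.I * ((4*r : ℝ) : ℂ)) - 1‖ := habs1
              _ ≤ t + t := by linarith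
              _ ≤ 6 * (t - 2*r) := by linarith
          · exact h3t
        · have hγj : γ j = -(4 * r) := hγ3 j hneg
          have hb1 : 4 * r ≤ -(β j) := by linarith
          have hb2 : -(β j) ≤ Real.pi := by linarith
          have ht4 : ‖Complex.exp (Complex.I * ((4*r : ℝ) : ℂ)) - 1‖ ≤ t := by
            have := Stmt13Aux.tfun_mono h4r0 hb1 hb2
            rwa [Stmt13Aux.tfun_neg (β j)] at this
          have h3t : 3 * r ≤ t := le_trans h3r ht4
          have hγc : ((γ j : ℝ) : ℂ) = ((-(4*r) : ℝ) : ℂ) := by rw [hγj]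
          have habs1 : ‖cj j‖
              ≤ t + ‖Complex.exp (Complex.I * ((-(4*r) : ℝ) : ℂ)) - 1‖ := by
            rw [hcj]
            simp only [hγc]
            calc ‖Complex.exp (Complex.I * (β j : ℂ))
                    - Complex.exp (Complex.I * ((-(4*r) : ℝ) : ℂ))‖
                ≤ ‖Complex.exp (Complex.I * (β j : ℂ)) - 1‖
                  + ‖1 - Complex.exp (Complex.I * ((-(4*r) : ℝ) : ℂ))‖ :=
                  norm_sub_le_norm_sub_add_norm_sub _ 1 _
              _ = t + ‖Complex.exp (Complex.I * ((-(4*r) : ℝ) : ℂ)) - 1‖ := by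
                  rw [ht, norm_sub_rev 1]
          have hneg4 : ‖Complex.exp (Complex.I * ((-(4*r) : ℝ) : ℂ)) - 1‖
              = ‖Complex.exp (Complex.I * ((4*r : ℝ) : ℂ)) - 1‖ :=
            Stmt13Aux.tfun_neg (4*r)
          constructor
          · calc ‖cj j‖
                ≤ t + ‖Complex.exp (Complex.I * ((-(4*r) : ℝ) : ℂ)) - 1‖ := habs1
              _ = t + ‖Complex.exp (Complex.I * ((4*r : ℝ) : ℂ)) - 1‖ := by
                  rw [hneg4]
              _ ≤ t + t := by linarith
              _ ≤ 6 * (t - 2*r) := by linarith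
          · exact h3t
      obtain ⟨hc6, h3t⟩ := key_scalar
      have htr : 0 ≤ t - 2*r := by linarith
      -- lower bound for hsN (a * f j)
      have hmulj : NormedSpace.exp h * f j
          = Complex.exp (Complex.I * (β j : ℂ)) • f j := by
        rw [exph]; exact Stmt13Aux.sum_smul_mul f hfidem hforth _ j
      have hafj : (1 - Complex.exp (Complex.I * (β j : ℂ))) • f j
          = a * f j - (u - 1) * f j := by
        rw [ha, sub_mul, sub_mul, hmulj, one_mul, sub_smul, one_smul]
        abel
      have hA := Stmt13Aux.hsN_nonneg (a * f j)
      have hT := Stmt13Aux.hsN_nonneg (f j)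
      have hlow : (t - 2*r) * hsN (f j) ≤ hsN (a * f j) := by
        have e1 : hsN ((1 - Complex.exp (Complex.I * (β j : ℂ))) • f j) = t * hsN (f j) := by
          rw [Stmt13Aux.hsN_smul]
          congr 1
          rw [ht, norm_sub_rev]
        rw [hafj] at e1
        have e2 : hsN (a * f j - (u - 1) * f j)
            ≤ hsN (a * f j) + hsN ((u - 1) * f j) := Stmt13Aux.hsN_sub_le _ _
        have e3 : hsN ((u - 1) * f j) ≤ opN (u - 1) * hsN (f j) :=
          Stmt13Aux.hsN_mul_le _ _
        have e4 : opN (u - 1) * hsN (f j) ≤ (2*r) * hsN (f j) :=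
          mul_le_mul_of_nonneg_right hunear.le hT
        nlinarith
      have key : ‖cj j‖ * hsN (f j) ≤ 6 * hsN (a * f j) := by
        calc ‖cj j‖ * hsN (f j) ≤ (6 * (t - 2*r)) * hsN (f j) :=
              mul_le_mul_of_nonneg_right hc6 hT
          _ = 6 * ((t - 2*r) * hsN (f j)) := by ring
          _ ≤ 6 * hsN (a * f j) := by linarith
      rw [Stmt13Aux.Ssq_eq_k_mul (f j) hk, Stmt13Aux.Ssq_eq_k_mul (a * f j) hk,
        ← Complex.sq_norm]
      have habsnn : 0 ≤ ‖cj j‖ := norm_nonneg _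
      have hsq := mul_le_mul key key (by positivity) (by positivity)
      nlinarith [hkR.le]
  -- aggregate
  have hWs : Stmt13Aux.Ssq w = ∑ j, Complex.normSq (cj j) * Stmt13Aux.Ssq (f j) :=
    Stmt13Aux.Ssq_sum_smul f hfsa hfidem hforth cj
  have hAs : ∑ j, Stmt13Aux.Ssq (a * f j) = Stmt13Aux.Ssq a :=
    Stmt13Aux.pythagoras f hfsa hfidem a hfsum
  have hWA : Stmt13Aux.Ssq w ≤ 36 * Stmt13Aux.Ssq a := by
    rw [hWs, ← hAs, Finset.mul_sum]
    exact Finset.sum_le_sum fun j _ => perj j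
  have hw6 : hsN w ≤ 6 * hsN a := by
    rw [Stmt13Aux.hsN_eq_sqrt, Stmt13Aux.hsN_eq_sqrt]
    have h1 : Stmt13Aux.Ssq w / k ≤ 36 * (Stmt13Aux.Ssq a / k) := by
      rw [← mul_div_assoc]
      gcongr
    have h2 := Real.sqrt_le_sqrt h1
    rwa [show (36:ℝ) = 6^2 by norm_num, Real.sqrt_mul (by positivity),
      Real.sqrt_sq (by norm_num : (0:ℝ) ≤ 6)] at h2
  calc hsN (u - NormedSpace.exp z) = hsN (a + w) := by rw [hsplit]
    _ ≤ hsN a + hsN w := Stmt13Aux.hsN_add_le a w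
    _ ≤ hsN a + 6 * hsN a := by linarith
    _ = 7 * hsN (u - NormedSpace.exp h) := by rw [← ha]; ring
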